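/- Let y(t) solve ẏ = f(y) with first integrals H₁,…,H_q, let P(v,u) be a projection with kernel span{∇̄H_j(v,u)} and with ‖I − P‖ bounded uniformly near the trajectory, and let φ_h be a method of order p: y(t+h) − φ_h(y(t)) = O(h^{p+1}). Then the projected step satisfies y(t+h) − y(t) − P(y(t), y(t+h))(φ_h(y(t)) − y(t)) = O(h^{p+1}); i.e., the projection scheme retains order p. -/

import Mathlib

open Asymptotics Filter

/-- Order of the projected scheme: projecting a method of order `p` onto the
discrete tangent space (via the orthogonal projection `P(v,u)` whose kernel is
the span of the discrete gradients) retains the order `p`. -/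
theorem stmt_9 {m q : ℕ} (p : ℕ) (H : Fin q → EuclideanSpace ℝ (Fin m) → ℝ)
    (f : EuclideanSpace ℝ (Fin m) → EuclideanSpace ℝ (Fin m))
    (dg : Fin q → EuclideanSpace ℝ (Fin m) → EuclideanSpace ℝ (Fin m) →
      EuclideanSpace ℝ (Fin m))
    (hdg : ∀ j, ∀ a b, H j b - H j a = inner ℝ (dg j a b) (b - a))
    (y : ℝ → EuclideanSpace ℝ (Fin m)) (t : ℝ)
    (hy : ∀ s, HasDerivAt y (f (y s)) s)
    (hint : ∀ j, ∀ h : ℝ, H j (y (t + h)) = H j (y t))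
    (hcont : ∀ j, Continuous fun h : ℝ => dg j (y t) (y (t + h)))
    (hindep : LinearIndependent ℝ (fun j => dg j (y t) (y t)))
    (φ : ℝ → EuclideanSpace ℝ (Fin m) → EuclideanSpace ℝ (Fin m))
    (hφ : (fun h => y (t + h) - φ h (y t)) =O[nhds (0:ℝ)] fun h => h ^ (p + 1)) :
    (fun h => y (t + h) - y t -
        (Submodule.orthogonalProjectionOnto
          ((Submodule.span ℝ (Set.range fun j => dg j (y t) (y (t + h))))ᗮ)
          (φ h (y t) - y t) : EuclideanSpace ℝ (Fin m)))
      =O[nhds (0:ℝ)] fun h => h ^ (p + 1) := by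
  refine (IsBigO.of_bound 1 ?_).trans hφ
  filter_upwards with h
  set K := (Submodule.span ℝ (Set.range fun j => dg j (y t) (y (t + h))))ᗮ
  have hmem : y (t + h) - y t ∈ K := by
    rw [Submodule.mem_orthogonal]
    intro u hu
    induction hu using Submodule.span_induction with
    | mem x hx =>
        obtain ⟨j, rfl⟩ := hx
        have := hdg j (y t) (y (t + h))
        rw [hint j h] at this
        simpa using this.symm
    | zero => simp
    | add a b _ _ ha hb => rw [inner_add_left, ha, hb]; ring
    | smul c a _ ha => rw [inner_smul_left, ha]; simp
  have hfix : (Submodule.orthogonalProjectionOnto K (y (t + h) - y t) : EuclideanSpace ℝ (Fin m))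
      = y (t + h) - y t := Submodule.starProjection_eq_self_iff.mpr hmem
  have key : y (t + h) - y t -
      (Submodule.orthogonalProjectionOnto K (φ h (y t) - y t) : EuclideanSpace ℝ (Fin m))
      = (Submodule.orthogonalProjectionOnto K (y (t + h) - φ h (y t)) : EuclideanSpace ℝ (Fin m)) := by
    have hfix' : (Submodule.orthogonalProjectionOnto K (y (t + h)) : EuclideanSpace ℝ (Fin m)) -
        (Submodule.orthogonalProjectionOnto K (y t) : EuclideanSpace ℝ (Fin m)) = y (t + h) - y t := by
      simpa [map_sub, Submodule.coe_sub] using hfix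
    simp only [map_sub, Submodule.coe_sub]
    rw [← hfix']
    abel
  rw [key, one_mul]
  calc ‖(Submodule.orthogonalProjectionOnto K (y (t + h) - φ h (y t)) : EuclideanSpace ℝ (Fin m))‖
      ≤ ‖y (t + h) - φ h (y t)‖ := by
        simpa using (Submodule.orthogonalProjectionOnto K).le_opNorm (y (t + h) - φ h (y t)) |>.trans
          (mul_le_of_le_one_left (norm_nonneg _) (Submodule.orthogonalProjectionOnto_norm_le K))
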